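/- In a cubic ring C (a commutative ring that is free of rank 3 as a ℤ-module) with a chosen ℤ-module basis 1, ω, θ of C, there exist unique lifts ω' ∈ ω + ℤ and θ' ∈ θ + ℤ of the images of ω and θ in C/ℤ such that ω'θ' ∈ ℤ·1. -/

import Mathlib

/-- In a cubic ring `C` (a commutative ring free of rank 3 as a ℤ-module) with a chosen
ℤ-module basis `1, ω, θ`, there are unique integer translates `ω' = ω + m` and `θ' = θ + n`
(the lifts of the images of `ω`, `θ` in `C/ℤ`) whose product `ω'θ'` lies in `ℤ·1`. -/
theorem cubic_ring_unique_normalized_basis (C : Type*) [CommRing C]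
    (b : Module.Basis (Fin 3) ℤ C) (hb : b 0 = 1) :
    ∃! p : ℤ × ℤ, ∃ k : ℤ, (b 1 + (p.1 : C)) * (b 2 + (p.2 : C)) = (k : C) := by
  set f := b.repr (b 1 * b 2) with hf
  have key : ∀ m n k : ℤ, ((b 1 + (m : C)) * (b 2 + (n : C)) = (k : C)) ↔
      (f 0 + m * n = k ∧ f 1 + n = 0 ∧ f 2 + m = 0) := by
    intro m n k
    have h1 : (b 1 + (m : C)) * (b 2 + (n : C)) =
        b 1 * b 2 + n • b 1 + m • b 2 + (m * n) • b 0 := by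
      simp only [hb, zsmul_eq_mul]
      push_cast
      ring
    have h2 : (k : C) = k • b 0 := by simp [hb]
    rw [h1, h2, ← b.repr.injective.eq_iff]
    simp only [map_add, map_smul, Module.Basis.repr_self]
    rw [Finsupp.ext_iff]
    constructor
    · intro h
      have h0 := h 0
      have h1' := h 1
      have h2' := h 2
      simp [Finsupp.single_apply] at h0 h1' h2'
      refine ⟨by linarith, by linarith, by linarith⟩
    · rintro ⟨e0, e1, e2⟩ j
      fin_cases j <;>
        simp [Finsupp.single_apply] <;> linarith
  refine ⟨(-(f 2), -(f 1)), ⟨f 0 + f 2 * f 1, ?_⟩, ?_⟩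
  · rw [key]
    refine ⟨by ring, by ring, by ring⟩
  · rintro ⟨m, n⟩ ⟨k, hk⟩
    rw [key] at hk
    obtain ⟨_, e1, e2⟩ := hk
    simp only [Prod.mk.injEq]
    constructor <;> linarith
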